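/- In E[[z]], the ratio ₂φ₁(0,0;cq;q,z) / ₂φ₁(0,0;c;q,z) = 1/(1 − a_1 z/(1 − a_2 z/(1 − a_3 z/(1 − ⋯)))), where a_n := −cq^{n−1}/((1 − cq^{n−1})(1 − cq^n)) for n ≥ 1. (Via ₂φ₁(0,0;q^{ν+1};q,−z²/4), this expresses the ratio of Jackson q-Bessel functions J^{(1)}_{ν+1}(z;q)/J^{(1)}_ν(z;q) as a moment generating function of orthogonal polynomials.) -/

import Mathlib

noncomputable section

/-- `E`, the fraction field of `ℚ[q,c]`. -/
abbrev E : Type := FractionRing (MvPolynomial (Fin 2) ℚ)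

def qv : E := algebraMap (MvPolynomial (Fin 2) ℚ) E (MvPolynomial.X 0)
def cv : E := algebraMap (MvPolynomial (Fin 2) ℚ) E (MvPolynomial.X 1)

/-- The q-Pochhammer symbol `(u;q)_n`. -/
def qPoch (u : E) (n : ℕ) : E := ∏ j ∈ Finset.range n, (1 - u * qv ^ j)

/-- `₂φ₁(0,0;C;q,z) = ∑_{n≥0} z^n/((q;q)_n (C;q)_n) ∈ E[[z]]`. -/
def phi00 (C : E) : PowerSeries E :=
  PowerSeries.mk fun n => 1 / (qPoch qv n * qPoch C n)

/-- `a_n = −cq^{n−1}/((1 − cq^{n−1})(1 − cq^n))`. -/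
def aJ (n : ℕ) : E :=
  -(cv * qv ^ ((n : ℤ) - 1)) / ((1 - cv * qv ^ ((n : ℤ) - 1)) * (1 - cv * qv ^ n))

/-- The depth-`N` convergent of the Stieltjes-type continued fraction
`1/(1 − a_1 z/(1 − a_2 z/(⋯ − a_N z/1)))`: `convS a N k` is the tail whose outermost
numerator is `a_{N-k+1}` (with `convS a N 0 = 1`), so the convergent is `convS a N N`. -/
def convS (a : ℕ → E) (N : ℕ) : ℕ → PowerSeries E
  | 0 => 1
  | k + 1 => (1 - PowerSeries.C (a (N - k)) * PowerSeries.X * convS a N k)⁻¹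

/-! ### Auxiliary lemmas -/

open PowerSeries

lemma algebraMap_ne_zero' {p : MvPolynomial (Fin 2) ℚ}
    (h : MvPolynomial.eval (fun _ => (0 : ℚ)) p ≠ 0) :
    algebraMap (MvPolynomial (Fin 2) ℚ) E p ≠ 0 := by
  have hp : p ≠ 0 := fun h0 => h (by simp [h0])
  exact (map_ne_zero_iff _ (IsFractionRing.injective (MvPolynomial (Fin 2) ℚ) E)).mpr hp

lemma one_sub_cq_ne (j : ℕ) : (1 : E) - cv * qv ^ j ≠ 0 := by
  have : (1 : E) - cv * qv ^ j
      = algebraMap (MvPolynomial (Fin 2) ℚ) E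
        (1 - MvPolynomial.X 1 * MvPolynomial.X 0 ^ j) := by
    simp [cv, qv, map_sub, map_mul, map_pow]
  rw [this]
  exact algebraMap_ne_zero' (by simp)

lemma one_sub_q_ne (j : ℕ) : (1 : E) - qv * qv ^ j ≠ 0 := by
  have : (1 : E) - qv * qv ^ j
      = algebraMap (MvPolynomial (Fin 2) ℚ) E
        (1 - MvPolynomial.X 0 * MvPolynomial.X 0 ^ j) := by
    simp [qv, map_sub, map_mul, map_pow]
  rw [this]
  exact algebraMap_ne_zero' (by simp)

lemma qPoch_q_ne (n : ℕ) : qPoch qv n ≠ 0 :=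
  Finset.prod_ne_zero_iff.mpr fun j _ => one_sub_q_ne j

lemma qPoch_cq_ne (k n : ℕ) : qPoch (cv * qv ^ k) n ≠ 0 := by
  refine Finset.prod_ne_zero_iff.mpr fun j _ => ?_
  have := one_sub_cq_ne (k + j)
  rwa [pow_add, ← mul_assoc] at this

lemma qPoch_succ (u : E) (n : ℕ) :
    qPoch u (n + 1) = qPoch u n * (1 - u * qv ^ n) :=
  Finset.prod_range_succ _ _

lemma qPoch_succ' (u : E) (n : ℕ) :
    qPoch u (n + 1) = (1 - u) * qPoch (u * qv) n := by
  rw [qPoch, Finset.prod_range_succ', qPoch, mul_comm]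
  congr 1
  · simp
  · exact Finset.prod_congr rfl fun j _ => by ring

lemma aJ_succ (k : ℕ) :
    aJ (k + 1) = -(cv * qv ^ k) / ((1 - cv * qv ^ k) * (1 - cv * qv ^ (k + 1))) := by
  unfold aJ
  have h1 : ((k + 1 : ℕ) : ℤ) - 1 = (k : ℤ) := by push_cast; ring
  rw [h1, zpow_natCast]

lemma field_key (a e b Q P : E) (h1 : (1:E) - e*b ≠ 0) (h2 : (1:E) - a ≠ 0)
    (h3 : (1:E) - a*e ≠ 0) (h4 : (1:E) - a*e*b ≠ 0) (hQ : Q ≠ 0) (hP : P ≠ 0) :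
    1/(Q*(1 - e*b) * (P*(1 - a*e*b))) - 1/(Q*(1 - e*b) * ((1 - a)*P))
      = -a/((1-a)*(1-a*e)) * (1/(Q * (P*(1 - a*e*b)/(1 - a*e)))) := by
  rw [← mul_div_assoc Q, div_div_eq_mul_div, div_sub_div _ _ (by positivity) (by positivity),
    div_mul_div_comm, div_eq_div_iff (by positivity) (by positivity)]
  ring

/-- `Φ k = ₂φ₁(0,0;cq^k;q,z)`. -/
def Phi (k : ℕ) : PowerSeries E := phi00 (cv * qv ^ k)

lemma constantCoeff_Phi (k : ℕ) : constantCoeff (Phi k) = 1 := by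
  simp [Phi, phi00, constantCoeff_mk, qPoch]

lemma constantCoeff_Phi_ne (k : ℕ) : constantCoeff (Phi k) ≠ 0 := by
  rw [constantCoeff_Phi]; exact one_ne_zero

/-- The contiguous relation `Φ k = Φ (k+1) − a_{k+1} z Φ (k+2)`. -/
lemma phi_rec (k : ℕ) :
    Phi k = Phi (k + 1) - PowerSeries.C (aJ (k + 1)) * PowerSeries.X * Phi (k + 2) := by
  ext n
  rw [map_sub, mul_assoc]
  cases n with
  | zero =>
    simp [Phi, phi00, qPoch]
  | succ m =>
    rw [coeff_C_mul, coeff_succ_X_mul]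
    simp only [Phi, phi00, coeff_mk]
    rw [aJ_succ]
    -- abbreviations
    have hQ := qPoch_succ qv m
    have hP0 : qPoch (cv * qv ^ k) (m + 1)
        = (1 - cv * qv ^ k) * qPoch (cv * qv ^ (k + 1)) m := by
      rw [qPoch_succ']
      congr 2
      rw [pow_succ]
      ring
    have hP1 := qPoch_succ (cv * qv ^ (k + 1)) m
    -- relation defining qPoch (cv*qv^(k+2)) m
    have hP2 : qPoch (cv * qv ^ (k + 2)) m
        = qPoch (cv * qv ^ (k + 1)) m * (1 - cv * qv ^ (k + 1) * qv ^ m)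
          / (1 - cv * qv ^ (k + 1)) := by
      have h : (1 - cv * qv ^ (k + 1)) * qPoch (cv * qv ^ (k + 2)) m
          = qPoch (cv * qv ^ (k + 1)) m * (1 - cv * qv ^ (k + 1) * qv ^ m) := by
        rw [← qPoch_succ]
        rw [qPoch_succ']
        congr 2
        rw [pow_succ]
        ring
      rw [eq_div_iff (one_sub_cq_ne (k + 1))]
      linear_combination h
    have e1 : cv * qv ^ (k + 1) = cv * qv ^ k * qv := by rw [pow_succ, mul_assoc]
    rw [hQ, hP0, hP1, hP2, e1]
    have h1 : (1 : E) - qv * qv ^ m ≠ 0 := one_sub_q_ne m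
    have h2 : (1 : E) - cv * qv ^ k ≠ 0 := one_sub_cq_ne k
    have h3 : (1 : E) - cv * qv ^ k * qv ≠ 0 := by
      have := one_sub_cq_ne (k + 1); rwa [e1] at this
    have h4 : (1 : E) - cv * qv ^ k * qv * qv ^ m ≠ 0 := by
      have := one_sub_cq_ne (k + 1 + m)
      rwa [pow_add, ← mul_assoc, e1] at this
    have h5 : qPoch qv m ≠ 0 := qPoch_q_ne m
    have h6 : qPoch (cv * qv ^ k * qv) m ≠ 0 := by
      have := qPoch_cq_ne (k + 1) m; rwa [e1] at this
    linear_combination -field_key (cv * qv ^ k) qv (qv ^ m) (qPoch qv m)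
      (qPoch (cv * qv ^ k * qv) m) h1 h2 h3 h4 h5 h6

/-- `R m = Φ(m+1)/Φ(m)`. -/
def Rj (m : ℕ) : PowerSeries E := Phi (m + 1) * (Phi m)⁻¹

lemma Rj_eq (m : ℕ) :
    Rj m = (1 - PowerSeries.C (aJ (m + 1)) * PowerSeries.X * Rj (m + 1))⁻¹ := by
  have key : 1 - PowerSeries.C (aJ (m + 1)) * PowerSeries.X * Rj (m + 1)
      = Phi m * (Phi (m + 1))⁻¹ := by
    rw [phi_rec m, sub_mul, Rj,
      PowerSeries.mul_inv_cancel _ (constantCoeff_Phi_ne (m + 1))]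
    ring
  rw [key]
  have hc : constantCoeff (Phi m * (Phi (m + 1))⁻¹) ≠ 0 := by
    rw [map_mul, constantCoeff_inv, constantCoeff_Phi, constantCoeff_Phi]
    norm_num
  rw [eq_inv_iff_mul_eq_one hc]
  rw [Rj]
  calc Phi (m + 1) * (Phi m)⁻¹ * (Phi m * (Phi (m + 1))⁻¹)
      = (Phi (m + 1) * (Phi (m + 1))⁻¹) * ((Phi m) * (Phi m)⁻¹) := by ring
    _ = 1 := by
        rw [PowerSeries.mul_inv_cancel _ (constantCoeff_Phi_ne (m + 1)),
          PowerSeries.mul_inv_cancel _ (constantCoeff_Phi_ne m), one_mul]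

lemma inv_step (a : E) (A B : PowerSeries E) (k : ℕ)
    (h : (PowerSeries.X : PowerSeries E) ^ k ∣ (A - B)) :
    (PowerSeries.X : PowerSeries E) ^ (k + 1) ∣
      ((1 - PowerSeries.C a * PowerSeries.X * A)⁻¹
        - (1 - PowerSeries.C a * PowerSeries.X * B)⁻¹) := by
  set U := 1 - PowerSeries.C a * PowerSeries.X * A with hU
  set V := 1 - PowerSeries.C a * PowerSeries.X * B with hV
  have hcU : constantCoeff U ≠ 0 := by
    simp [hU, constantCoeff_X]
  have hcV : constantCoeff V ≠ 0 := by
    simp [hV, constantCoeff_X]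
  have key : U⁻¹ - V⁻¹ = U⁻¹ * (V - U) * V⁻¹ := by
    rw [mul_sub, sub_mul]
    rw [mul_assoc U⁻¹ V V⁻¹, PowerSeries.mul_inv_cancel _ hcV, mul_one]
    rw [PowerSeries.inv_mul_cancel _ hcU, one_mul]
  have hVU : V - U = PowerSeries.C a * PowerSeries.X * (A - B) := by
    rw [hU, hV]; ring
  obtain ⟨D, hD⟩ := h
  rw [key, hVU, hD]
  exact ⟨U⁻¹ * (PowerSeries.C a * D) * V⁻¹, by ring⟩

lemma conv_approx (N : ℕ) : ∀ k, k ≤ N →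
    (PowerSeries.X : PowerSeries E) ^ k ∣ (Rj (N - k) - convS aJ N k) := by
  intro k
  induction k with
  | zero => intro _; simp only [pow_zero]; exact one_dvd _
  | succ k ih =>
    intro hk
    have hk' : k ≤ N := Nat.le_of_succ_le hk
    have h1 : N - (k + 1) + 1 = N - k := by omega
    rw [convS, Rj_eq (N - (k + 1)), h1]
    exact inv_step _ _ _ k (ih hk')

/-- Equation (6.6): `₂φ₁(0,0;cq;q,z)/₂φ₁(0,0;c;q,z)` equals the continued fraction
`1/(1 − a_1 z/(1 − a_2 z/(1 − ⋯)))`, in the sense that for every `N ≥ 1` the depth-`N`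
convergent agrees with the ratio modulo `z^N`. (Via `₂φ₁(0,0;q^{ν+1};q,−z²/4)` this
expresses `J^{(1)}_{ν+1}(z;q)/J^{(1)}_ν(z;q)` as a moment generating function of
orthogonal polynomials.) -/
theorem jackson_ratio_continued_fraction :
    ∀ N : ℕ, 1 ≤ N → ∀ i < N,
      PowerSeries.coeff i (phi00 (cv * qv) * (phi00 cv)⁻¹)
        = PowerSeries.coeff i (convS aJ N N) := by
  intro N _ i hi
  have h := conv_approx N N le_rfl
  rw [Nat.sub_self] at h
  have h0 : Rj 0 = phi00 (cv * qv) * (phi00 cv)⁻¹ := by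
    simp [Rj, Phi, pow_one, pow_zero, mul_one]
  rw [h0] at h
  have h2 := PowerSeries.X_pow_dvd_iff.mp h i hi
  rw [map_sub, sub_eq_zero] at h2
  exact h2

end
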